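/- arXiv:2110.05194 — 5 statements merged into one kernel-verified Lean document; each statement's English description precedes it below -/
import Mathlib

section
/- If a and b are coprime integers and n is an odd integer greater than one, then every integer d dividing both a + b and λ_n(a,b) also divides n. -/
def lambdaPoly (n : ℕ) (a b : ℤ) : ℤ :=
  ∑ i ∈ Finset.range n, (-1) ^ i * a ^ (n - 1 - i) * b ^ i

theorem stmt_12 (a b : ℤ) (h : IsCoprime a b) (n : ℕ) (hn : Odd n) (hn1 : 1 < n)
    (d : ℤ) (hd1 : d ∣ a + b) (hd2 : d ∣ lambdaPoly n a b) : d ∣ (n : ℤ) := by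
  -- Step 1: (a+b) ∣ lambdaPoly n a b - n * a^(n-1)
  have key : (a + b) ∣ lambdaPoly n a b - n * a ^ (n - 1) := by
    have : lambdaPoly n a b - n * a ^ (n - 1)
        = ∑ i ∈ Finset.range n, ((-1) ^ i * a ^ (n - 1 - i) * b ^ i - a ^ (n - 1)) := by
      rw [Finset.sum_sub_distrib, Finset.sum_const, Finset.card_range]
      simp [lambdaPoly, mul_comm]
    rw [this]
    apply Finset.dvd_sum
    intro i hi
    have hile : i ≤ n - 1 := Nat.le_sub_one_of_lt (Finset.mem_range.mp hi)
    have hpow : a ^ (n - 1 - i) * a ^ i = a ^ (n - 1) := by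
      rw [← pow_add, Nat.sub_add_cancel hile]
    have h1 : (-1 : ℤ) ^ i * (-1) ^ i = 1 := by
      rw [← pow_add, ← two_mul, pow_mul]; norm_num
    have heq : (-1 : ℤ) ^ i * a ^ (n - 1 - i) * b ^ i - a ^ (n - 1)
        = (-1) ^ i * a ^ (n - 1 - i) * (b ^ i - (-a) ^ i) := by
      rw [neg_pow]
      linear_combination a ^ (n - 1 - i) * a ^ i * h1 + hpow
    rw [heq]
    have hdvd := sub_dvd_pow_sub_pow b (-a) i
    rw [sub_neg_eq_add, add_comm] at hdvd
    exact hdvd.mul_left _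
  have hd3 : d ∣ (n : ℤ) * a ^ (n - 1) := by
    have := dvd_sub hd2 (hd1.trans key)
    simpa using this
  -- Step 2: IsCoprime d a
  have hcop : IsCoprime d a := by
    obtain ⟨u, v, huv⟩ := h
    obtain ⟨k, hk⟩ := hd1
    refine ⟨v * k, u - v, ?_⟩
    have hb : b = (a + b) - a := by ring
    calc v * k * d + (u - v) * a = u * a + v * ((a+b) - a) := by rw [hk]; ring
    _ = u * a + v * b := by rw [← hb]
    _ = 1 := huv
  exact (hcop.pow_right).dvd_of_dvd_mul_right hd3
end

section
/- Let a and b be coprime integers and n an odd prime. If p is a prime with p ≠ n and p divides λ_n(a,b), then p ≡ 1 (mod n). -/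
lemma lambda_mul_aux {R : Type*} [CommRing R] (x y : R) (n : ℕ) (hodd : Odd n) :
    (∑ i ∈ Finset.range n, (-1 : R) ^ i * x ^ (n - 1 - i) * y ^ i) * (x + y)
      = x ^ n + y ^ n := by
  have key := geom_sum₂_mul (-y) x n
  have hsum : ∑ i ∈ Finset.range n, (-y) ^ i * x ^ (n - 1 - i)
      = ∑ i ∈ Finset.range n, (-1 : R) ^ i * x ^ (n - 1 - i) * y ^ i :=
    Finset.sum_congr rfl fun i _ => by rw [neg_pow]; ring
  rw [hsum, hodd.neg_pow] at key
  linear_combination -key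

theorem stmt_14 (a b : ℤ) (h : IsCoprime a b) (n : ℕ) (hn : n.Prime) (hodd : Odd n)
    (p : ℕ) (hp : p.Prime) (hpn : p ≠ n) (hdvd : (p : ℤ) ∣ lambdaPoly n a b) :
    p ≡ 1 [MOD n] := by
  haveI : Fact p.Prime := ⟨hp⟩
  have hn2 : 2 ≤ n := hn.two_le
  have hev : Even (n - 1) := by
    rcases hodd with ⟨k, hk⟩
    exact ⟨k, by omega⟩
  set A : ZMod p := (a : ZMod p) with hA
  set B : ZMod p := (b : ZMod p) with hB
  have hL : ∑ i ∈ Finset.range n, (-1 : ZMod p) ^ i * A ^ (n - 1 - i) * B ^ i = 0 := by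
    have := (ZMod.intCast_zmod_eq_zero_iff_dvd _ p).2 hdvd
    rw [lambdaPoly] at this
    push_cast at this
    exact this
  have hcop : ¬ ((p : ℤ) ∣ a ∧ (p : ℤ) ∣ b) := by
    rintro ⟨ha, hb⟩
    exact (Nat.prime_iff_prime_int.mp hp).not_unit (h.isUnit_of_dvd' ha hb)
  -- B ≠ 0
  have hB0 : B ≠ 0 := by
    intro hb0
    have hpb : (p : ℤ) ∣ b := (ZMod.intCast_zmod_eq_zero_iff_dvd _ p).1 hb0
    have hA0 : A ^ (n - 1) = 0 := by
      rw [← hL, Finset.sum_eq_single 0]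
      · simp
      · intro i _ hi
        rw [hb0, zero_pow hi, mul_zero]
      · intro hc
        exact absurd (Finset.mem_range.2 hn.pos) hc
    have : A = 0 := pow_eq_zero_iff (by omega : n - 1 ≠ 0) |>.1 hA0
    exact hcop ⟨(ZMod.intCast_zmod_eq_zero_iff_dvd _ p).1 this, hpb⟩
  have hA0 : A ≠ 0 := by
    intro ha0
    have hpa : (p : ℤ) ∣ a := (ZMod.intCast_zmod_eq_zero_iff_dvd _ p).1 ha0
    have hB' : (-1 : ZMod p) ^ (n - 1) * A ^ (n - 1 - (n - 1)) * B ^ (n - 1) = 0 := by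
      rw [← hL, Finset.sum_eq_single (n - 1)]
      · intro i hi hine
        have : i < n - 1 := by
          have := Finset.mem_range.1 hi; omega
        rw [ha0, zero_pow (by omega : n - 1 - i ≠ 0)]
        ring
      · intro hc
        exact absurd (Finset.mem_range.2 (by omega : n - 1 < n)) hc
    rw [Nat.sub_self, pow_zero, hev.neg_one_pow] at hB'
    simp only [one_mul, mul_one] at hB'
    exact hB0 (pow_eq_zero_iff (by omega : n - 1 ≠ 0) |>.1 hB')
  -- from lambda = 0 get A^n = -B^n
  have hkey : A ^ n = -(B ^ n) := by
    have := lambda_mul_aux A B n hodd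
    rw [hL, zero_mul] at this
    linear_combination -this
  set x : ZMod p := A * B⁻¹ with hx
  have hxn : x ^ n = -1 := by
    rw [hx, mul_pow, hkey, inv_pow, neg_mul, mul_inv_cancel₀ (pow_ne_zero n hB0)]
  have hx0 : x ≠ 0 := mul_ne_zero hA0 (inv_ne_zero hB0)
  -- rule out x = 1 and x = -1
  have hxne1 : x ≠ 1 := by
    intro h1
    have hAB : A = B := by
      rw [hx] at h1
      field_simp at h1
      exact h1
    have : (∑ i ∈ Finset.range n, (-1 : ZMod p) ^ i * A ^ (n - 1 - i) * B ^ i)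
        = B ^ (n - 1) := by
      calc (∑ i ∈ Finset.range n, (-1 : ZMod p) ^ i * A ^ (n - 1 - i) * B ^ i)
          = ∑ i ∈ Finset.range n, (-1 : ZMod p) ^ i * B ^ (n - 1) := by
            refine Finset.sum_congr rfl fun i hi => ?_
            have hi' := Finset.mem_range.1 hi
            rw [hAB, mul_assoc, ← pow_add]
            congr 2
            omega
        _ = (∑ i ∈ Finset.range n, (-1 : ZMod p) ^ i) * B ^ (n - 1) := by
            rw [← Finset.sum_mul]
        _ = B ^ (n - 1) := by
            rw [neg_one_geom_sum, if_neg (Nat.not_even_iff_odd.2 hodd), one_mul]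
    rw [hL] at this
    exact hB0 (pow_eq_zero_iff (by omega : n - 1 ≠ 0) |>.1 this.symm)
  have hxnem1 : x ≠ -1 := by
    intro h1
    have hAB : A = -B := by
      rw [hx] at h1
      field_simp at h1
      linear_combination h1
    have hsum : (∑ i ∈ Finset.range n, (-1 : ZMod p) ^ i * A ^ (n - 1 - i) * B ^ i)
        = (n : ZMod p) * B ^ (n - 1) := by
      calc (∑ i ∈ Finset.range n, (-1 : ZMod p) ^ i * A ^ (n - 1 - i) * B ^ i)
          = ∑ i ∈ Finset.range n, (B : ZMod p) ^ (n - 1) := by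
            refine Finset.sum_congr rfl fun i hi => ?_
            have hi' := Finset.mem_range.1 hi
            have h1' : n - 1 - i + i = n - 1 := by omega
            have h2' : i + (n - 1 - i) = n - 1 := by omega
            calc (-1 : ZMod p) ^ i * A ^ (n - 1 - i) * B ^ i
                = ((-1) ^ i * (-1) ^ (n - 1 - i)) * (B ^ (n - 1 - i) * B ^ i) := by
                  rw [hAB, neg_pow]; ring
              _ = (-1 : ZMod p) ^ (n - 1) * B ^ (n - 1) := by
                  rw [← pow_add, ← pow_add, h2', h1']
              _ = B ^ (n - 1) := by rw [hev.neg_one_pow, one_mul]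
        _ = (n : ZMod p) * B ^ (n - 1) := by
            rw [Finset.sum_const, Finset.card_range, nsmul_eq_mul]
    rw [hL] at hsum
    have hn0 : (n : ZMod p) = 0 := by
      rcases mul_eq_zero.1 hsum.symm with h' | h'
      · exact h'
      · exact absurd h' (pow_ne_zero _ hB0)
    have : p ∣ n := (ZMod.natCast_eq_zero_iff _ p).1 hn0
    exact hpn ((Nat.prime_dvd_prime_iff_eq hp hn).1 this)
  -- order argument
  have hx2 : x ^ 2 ≠ 1 := by
    intro h2
    rcases sq_eq_one_iff.1 h2 with h' | h'
    · exact hxne1 h'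
    · exact hxnem1 h'
  have hx2n : x ^ (2 * n) = 1 := by
    rw [mul_comm, pow_mul, hxn]
    ring
  have hdvd2n : orderOf x ∣ 2 * n := orderOf_dvd_of_pow_eq_one hx2n
  have hnd2 : ¬ orderOf x ∣ 2 := fun hd => hx2 (orderOf_dvd_iff_pow_eq_one.1 hd)
  have hnd : n ∣ orderOf x := by
    by_contra hc
    exact hnd2 ((Nat.Coprime.symm (hn.coprime_iff_not_dvd.2 hc)).dvd_of_dvd_mul_right hdvd2n)
  have hdp : orderOf x ∣ p - 1 :=
    orderOf_dvd_of_pow_eq_one (ZMod.pow_card_sub_one_eq_one hx0)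
  have hnp : n ∣ p - 1 := hnd.trans hdp
  exact ((Nat.modEq_iff_dvd' hp.one_lt.le).2 hnp).symm
end

section
/- Let a and b be coprime integers and n an odd prime. If p is a prime with p ≠ n and p divides λ_n(a,b), then p > n. -/
section aux
variable {R : Type*} [CommRing R]

lemma aux_sign {n i : ℕ} (hodd : Odd n) (hi : i < n) :
    ((-1 : R)) ^ (n - 1 - i) = (-1) ^ i := by
  have hle : i ≤ n - 1 := Nat.le_sub_one_of_lt hi
  have h1 : ((-1 : R)) ^ i * (-1) ^ (n - 1 - i) = (-1) ^ (n - 1) := by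
    rw [← pow_add, Nat.add_sub_cancel' hle]
  have h2 : ((-1 : R)) ^ (n - 1) = 1 :=
    Even.neg_one_pow (Nat.Odd.sub_odd hodd odd_one)
  have h3 : ((-1 : R)) ^ i * (-1) ^ i = 1 := by
    rw [← pow_add]; exact Even.neg_one_pow ⟨i, rfl⟩
  calc ((-1 : R)) ^ (n - 1 - i)
      = ((-1) ^ i * (-1) ^ i) * (-1) ^ (n - 1 - i) := by rw [h3, one_mul]
    _ = (-1) ^ i * ((-1) ^ i * (-1) ^ (n - 1 - i)) := by ring
    _ = (-1) ^ i := by rw [h1, h2, mul_one]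

lemma aux_geom (n : ℕ) (hodd : Odd n) (A B : R) :
    ∑ i ∈ Finset.range n, (-1) ^ i * A ^ (n - 1 - i) * B ^ i
      = ∑ i ∈ Finset.range n, B ^ i * (-A) ^ (n - 1 - i) := by
  refine Finset.sum_congr rfl fun i hi => ?_
  rw [Finset.mem_range] at hi
  rw [neg_pow A (n - 1 - i), aux_sign hodd hi]; ring

lemma aux_A_zero (n : ℕ) (hn : 0 < n) (B : R) :
    ∑ i ∈ Finset.range n, (-1 : R) ^ i * (0 : R) ^ (n - 1 - i) * B ^ i
      = (-1) ^ (n - 1) * B ^ (n - 1) := by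
  rw [Finset.sum_eq_single (n - 1)]
  · simp
  · intro i hi hne
    rw [Finset.mem_range] at hi
    rw [zero_pow (by omega), mul_zero, zero_mul]
  · intro hmem
    exact absurd (Finset.mem_range.mpr (by omega)) hmem

lemma aux_B_zero (n : ℕ) (hn : 0 < n) (A : R) :
    ∑ i ∈ Finset.range n, (-1 : R) ^ i * A ^ (n - 1 - i) * (0 : R) ^ i
      = A ^ (n - 1) := by
  rw [Finset.sum_eq_single 0]
  · simp
  · intro i hi hne
    rw [zero_pow hne, mul_zero]
  · intro hmem
    exact absurd (Finset.mem_range.mpr (by omega)) hmem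

lemma aux_neg (n : ℕ) (hodd : Odd n) (B : R) :
    ∑ i ∈ Finset.range n, (-1 : R) ^ i * (-B) ^ (n - 1 - i) * B ^ i
      = n * B ^ (n - 1) := by
  rw [Finset.sum_congr rfl (fun i hi => ?_), Finset.sum_const, Finset.card_range,
    nsmul_eq_mul]
  rw [Finset.mem_range] at hi
  have hle : i ≤ n - 1 := Nat.le_sub_one_of_lt hi
  rw [neg_pow B (n - 1 - i), aux_sign hodd hi]
  have h3 : ((-1 : R)) ^ i * (-1) ^ i = 1 := by
    rw [← pow_add]; exact Even.neg_one_pow ⟨i, rfl⟩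
  calc (-1 : R) ^ i * ((-1) ^ i * B ^ (n - 1 - i)) * B ^ i
      = ((-1) ^ i * (-1) ^ i) * (B ^ (n - 1 - i) * B ^ i) := by ring
    _ = B ^ (n - 1 - i + i) := by rw [h3, one_mul, pow_add]
    _ = B ^ (n - 1) := by rw [Nat.sub_add_cancel hle]

end aux

lemma aux_two (a b : ℤ) (h : IsCoprime a b) (n : ℕ) (hn0 : 0 < n) (hodd : Odd n)
    (hL : ∑ i ∈ Finset.range n,
      (-1 : ZMod 2) ^ i * (a : ZMod 2) ^ (n - 1 - i) * (b : ZMod 2) ^ i = 0) :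
    False := by
  have hpow1 : ((-1 : ZMod 2)) ^ (n - 1) = 1 :=
    Even.neg_one_pow (Nat.Odd.sub_odd hodd odd_one)
  have hall : ∀ x : ZMod 2, x = 0 ∨ x = 1 := by decide
  rcases hall (a : ZMod 2) with hA | hA <;> rcases hall (b : ZMod 2) with hB | hB
  · have hpa : (2 : ℤ) ∣ a := by
      exact_mod_cast (ZMod.intCast_zmod_eq_zero_iff_dvd a 2).mp hA
    have hpb : (2 : ℤ) ∣ b := by
      exact_mod_cast (ZMod.intCast_zmod_eq_zero_iff_dvd b 2).mp hB
    have hu := h.isUnit_of_dvd' hpa hpb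
    rw [Int.isUnit_iff] at hu
    rcases hu with hu | hu <;> omega
  · rw [hA, hB, aux_A_zero n hn0, hpow1, one_mul, one_pow] at hL
    exact one_ne_zero hL
  · rw [hA, hB, aux_B_zero n hn0, one_pow] at hL
    exact one_ne_zero hL
  · rw [hA, hB] at hL
    simp only [one_pow, mul_one] at hL
    have hneg : (-1 : ZMod 2) = 1 := by decide
    rw [Finset.sum_congr rfl (fun i _ => by rw [hneg, one_pow]), Finset.sum_const,
      Finset.card_range, nsmul_eq_mul, mul_one] at hL
    have h2n : (2 : ℕ) ∣ n := (ZMod.natCast_eq_zero_iff n 2).mp hL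
    obtain ⟨k, hk⟩ := h2n
    obtain ⟨m, hm⟩ := hodd
    omega


theorem stmt_15 (a b : ℤ) (h : IsCoprime a b) (n : ℕ) (hn : n.Prime) (hodd : Odd n)
    (p : ℕ) (hp : p.Prime) (hpn : p ≠ n) (hdvd : (p : ℤ) ∣ lambdaPoly n a b) :
    p > n := by
  have hn0 : 0 < n := hn.pos
  have hn2 : 2 ≤ n := hn.two_le
  have hp2le : 2 ≤ p := hp.two_le
  haveI : NeZero p := ⟨hp.ne_zero⟩
  -- reduce to ZMod p
  have hL : ∑ i ∈ Finset.range n,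
      (-1 : ZMod p) ^ i * (a : ZMod p) ^ (n - 1 - i) * (b : ZMod p) ^ i = 0 := by
    have h0 := (ZMod.intCast_zmod_eq_zero_iff_dvd (lambdaPoly n a b) p).mpr hdvd
    unfold lambdaPoly at h0
    push_cast at h0
    exact h0
  have hp2 : p ≠ 2 := fun h2 => aux_two a b h n hn0 hodd (h2 ▸ hL)
  haveI hfact : Fact p.Prime := ⟨hp⟩
  -- b is nonzero mod p
  have hB : (b : ZMod p) ≠ 0 := by
    intro hB0
    rw [hB0, aux_B_zero n hn0] at hL
    have hA0 : (a : ZMod p) = 0 := pow_eq_zero_iff (by omega : n - 1 ≠ 0) |>.mp hL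
    have hpa : (p : ℤ) ∣ a := (ZMod.intCast_zmod_eq_zero_iff_dvd a p).mp hA0
    have hpb : (p : ℤ) ∣ b := (ZMod.intCast_zmod_eq_zero_iff_dvd b p).mp hB0
    have hu := h.isUnit_of_dvd' hpa hpb
    rw [Int.isUnit_iff] at hu
    rcases hu with hu | hu <;> omega
  -- a is nonzero mod p
  have hA : (a : ZMod p) ≠ 0 := by
    intro hA0
    rw [hA0, aux_A_zero n hn0] at hL
    have h2 : ((-1 : ZMod p)) ^ (n - 1) = 1 :=
      Even.neg_one_pow (Nat.Odd.sub_odd hodd odd_one)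
    rw [h2, one_mul] at hL
    exact hB (pow_eq_zero_iff (by omega : n - 1 ≠ 0) |>.mp hL)
  -- key identity: a^n = -b^n mod p
  have key : (a : ZMod p) ^ n = -(b : ZMod p) ^ n := by
    have hg := geom_sum₂_mul (b : ZMod p) (-(a : ZMod p)) n
    rw [← aux_geom n hodd, hL, zero_mul] at hg
    have hnp : (-(a : ZMod p)) ^ n = -(a : ZMod p) ^ n := Odd.neg_pow hodd _
    rw [hnp] at hg
    have h0 : (a : ZMod p) ^ n + (b : ZMod p) ^ n = 0 := by linear_combination -hg
    exact eq_neg_of_add_eq_zero_left h0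
  -- the element x = a/b has x^n = -1
  set x : ZMod p := (a : ZMod p) / (b : ZMod p) with hxdef
  have hx : x ^ n = -1 := by
    rw [hxdef, div_pow, key, neg_div, div_self (pow_ne_zero n hB)]
  have hne11 : (-1 : ZMod p) ≠ 1 := by
    intro h1
    have h20 : ((2 : ℕ) : ZMod p) = 0 := by push_cast; linear_combination -h1
    have := (ZMod.natCast_eq_zero_iff 2 p).mp h20
    have := Nat.le_of_dvd (by norm_num) this
    omega
  have hxn1 : x ^ n ≠ 1 := by rw [hx]; exact hne11
  have hx2n : x ^ (2 * n) = 1 := by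
    rw [mul_comm, pow_mul, hx, neg_one_sq]
  have hd : orderOf x ∣ 2 * n := orderOf_dvd_of_pow_eq_one hx2n
  have hdn : ¬ orderOf x ∣ n := fun hdv => hxn1 (orderOf_dvd_iff_pow_eq_one.mp hdv)
  have hx1 : x ≠ 1 := by
    intro h1; exact hxn1 (by rw [h1, one_pow])
  have hcase : orderOf x = 2 ∨ orderOf x = 2 * n := by
    by_cases hnd : n ∣ orderOf x
    · obtain ⟨e, he⟩ := hnd
      have he2 : e ∣ 2 := by
        have h1 : n * e ∣ n * 2 := by rw [← he, mul_comm n 2]; exact hd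
        exact (mul_dvd_mul_iff_left (by omega : n ≠ 0)).mp h1
      rcases (Nat.prime_two.eq_one_or_self_of_dvd e he2) with he1 | he1
      · exfalso; apply hdn; rw [he, he1, mul_one]
      · right; rw [he, he1, mul_comm]
    · have hcop : Nat.Coprime n (orderOf x) := (hn.coprime_iff_not_dvd).mpr hnd
      have hd2 : orderOf x ∣ 2 := hcop.symm.dvd_of_dvd_mul_right hd
      rcases (Nat.prime_two.eq_one_or_self_of_dvd _ hd2) with he1 | he1
      · exact absurd (orderOf_eq_one_iff.mp he1) hx1
      · exact Or.inl he1
  rcases hcase with hord | hord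
  · -- x = -1, so a ≡ -b, so n·b^(n-1) ≡ 0, so p = n : contradiction
    exfalso
    have hx2 : x * x = 1 := by
      have := pow_orderOf_eq_one x
      rw [hord, pow_two] at this
      exact this
    rcases mul_self_eq_one_iff.mp hx2 with h1 | h1
    · exact hx1 h1
    · have hAB : (a : ZMod p) = -(b : ZMod p) := by
        have := (div_eq_iff hB).mp h1
        rw [this]; ring
      rw [hAB, aux_neg n hodd] at hL
      have hn0' : ((n : ℕ) : ZMod p) = 0 := by
        rcases mul_eq_zero.mp hL with h0 | h0
        · exact h0
        · exact absurd h0 (pow_ne_zero _ hB)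
      have hpdn : p ∣ n := (ZMod.natCast_eq_zero_iff n p).mp hn0'
      exact hpn ((Nat.prime_dvd_prime_iff_eq hp hn).mp hpdn)
  · -- orderOf x = 2n divides p - 1
    have hx0 : x ≠ 0 := div_ne_zero hA hB
    have hdvdp : 2 * n ∣ p - 1 := hord ▸ ZMod.orderOf_dvd_card_sub_one hx0
    have := Nat.le_of_dvd (by omega) hdvdp
    omega
end

section
/- Let a and b be coprime integers and n an odd prime. If n does not divide λ_n(a,b), then λ_n(a,b) ≡ 1 (mod n). -/
lemma lambda_mul (n : ℕ) (hodd : Odd n) (a b : ℤ) :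
    lambdaPoly n a b * (a + b) = a ^ n + b ^ n := by
  have key := geom_sum₂_mul (-b) a n
  have : lambdaPoly n a b = ∑ i ∈ Finset.range n, (-b) ^ i * a ^ (n - 1 - i) := by
    unfold lambdaPoly
    refine Finset.sum_congr rfl fun i _ => ?_
    ring
  rw [this]
  have h2 : (-b : ℤ) ^ n = -(b ^ n) := hodd.neg_pow b
  calc (∑ i ∈ Finset.range n, (-b) ^ i * a ^ (n - 1 - i)) * (a + b)
      = -((∑ i ∈ Finset.range n, (-b) ^ i * a ^ (n - 1 - i)) * (-b - a)) := by ring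
    _ = -((-b) ^ n - a ^ n) := by rw [key]
    _ = a ^ n + b ^ n := by rw [h2]; ring

theorem stmt_17 (a b : ℤ) (h : IsCoprime a b) (n : ℕ) (hn : n.Prime) (hodd : Odd n)
    (hndvd : ¬ (n : ℤ) ∣ lambdaPoly n a b) :
    lambdaPoly n a b ≡ 1 [ZMOD (n : ℤ)] := by
  haveI : Fact n.Prime := ⟨hn⟩
  set L := lambdaPoly n a b with hL
  -- work in ZMod n
  have hLz : ((L : ZMod n)) ≠ 0 := by
    rw [Ne, ZMod.intCast_zmod_eq_zero_iff_dvd]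
    exact_mod_cast hndvd
  have hkey : (L : ZMod n) * ((a : ZMod n) + b) = (a : ZMod n) + b := by
    have := lambda_mul n hodd a b
    have h2 : ((L * (a + b) : ℤ) : ZMod n) = ((a ^ n + b ^ n : ℤ) : ZMod n) := by
      rw [this]
    push_cast at h2
    rw [ZMod.pow_card, ZMod.pow_card] at h2
    push_cast
    linear_combination h2
  have hab : (a : ZMod n) + b ≠ 0 := by
    intro h0
    apply hLz
    have hb : (b : ZMod n) = -(a : ZMod n) := eq_neg_of_add_eq_zero_right (by linear_combination h0)
    have : (L : ZMod n) = ∑ i ∈ Finset.range n, (a : ZMod n) ^ (n - 1) := by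
      rw [hL]; unfold lambdaPoly; push_cast
      refine Finset.sum_congr rfl fun i hi => ?_
      have hi' : i ≤ n - 1 := Nat.le_sub_one_of_lt (Finset.mem_range.mp hi)
      calc ((-1 : ZMod n)) ^ i * (a : ZMod n) ^ (n - 1 - i) * (b : ZMod n) ^ i
          = ((-1) * (-1) : ZMod n) ^ i * (a : ZMod n) ^ ((n - 1 - i) + i) := by
            rw [hb, mul_pow, pow_add, neg_pow]; ring
        _ = (a : ZMod n) ^ (n - 1) := by rw [Nat.sub_add_cancel hi']; norm_num
    rw [this, Finset.sum_const, Finset.card_range, nsmul_eq_mul, ZMod.natCast_self, zero_mul]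
  have hone : (L : ZMod n) = 1 :=
    mul_right_cancel₀ hab (hkey.trans (one_mul _).symm)
  rw [← ZMod.intCast_eq_intCast_iff]
  rw [hone]; norm_num
end

section
/- Let a and b be integers (not necessarily coprime) and n an odd prime. If n does not divide λ_n(a,b), then λ_n(a,b) ≡ 1 (mod n). -/
theorem stmt_18 (a b : ℤ) (n : ℕ) (hn : n.Prime) (hodd : Odd n)
    (hndvd : ¬ (n : ℤ) ∣ lambdaPoly n a b) :
    lambdaPoly n a b ≡ 1 [ZMOD (n : ℤ)] := by
  haveI : Fact n.Prime := ⟨hn⟩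
  rw [← ZMod.intCast_eq_intCast_iff]
  set x : ZMod n := (a : ZMod n) with hx
  set y : ZMod n := (b : ZMod n) with hy
  have hL : ((lambdaPoly n a b : ℤ) : ZMod n)
      = ∑ i ∈ Finset.range n, (-1) ^ i * x ^ (n - 1 - i) * y ^ i := by
    unfold lambdaPoly
    push_cast
    rfl
  have hLne : ((lambdaPoly n a b : ℤ) : ZMod n) ≠ 0 := by
    rwa [Ne, ZMod.intCast_zmod_eq_zero_iff_dvd]
  by_cases hxy : x + y = 0
  · exfalso
    apply hLne
    have hyx : y = -x := by linear_combination hxy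
    rw [hL]
    have : ∀ i ∈ Finset.range n, (-1 : ZMod n) ^ i * x ^ (n - 1 - i) * y ^ i
        = x ^ (n - 1) := by
      intro i hi
      rw [Finset.mem_range] at hi
      have hle : i ≤ n - 1 := by omega
      rw [hyx, neg_pow x i]
      have : (-1 : ZMod n) ^ i * x ^ (n - 1 - i) * ((-1 : ZMod n) ^ i * x ^ i)
          = ((-1 : ZMod n) ^ i) ^ 2 * (x ^ (n - 1 - i) * x ^ i) := by ring
      rw [this, ← pow_mul, mul_comm i 2, pow_mul, neg_one_sq, one_pow, one_mul,
        ← pow_add]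
      congr 1
      omega
    rw [Finset.sum_congr rfl this, Finset.sum_const, Finset.card_range,
      nsmul_eq_mul, ZMod.natCast_self, zero_mul]
  · -- L = geom_sum₂ at (x, -y)
    have hreindex : (∑ i ∈ Finset.range n, (-1 : ZMod n) ^ i * x ^ (n - 1 - i) * y ^ i)
        = ∑ i ∈ Finset.range n, x ^ i * (-y) ^ (n - 1 - i) := by
      rw [← Finset.sum_range_reflect (fun i => x ^ i * (-y) ^ (n - 1 - i)) n]
      apply Finset.sum_congr rfl
      intro i hi
      rw [Finset.mem_range] at hi
      have h1 : n - 1 - (n - 1 - i) = i := by omega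
      rw [h1, neg_pow]
      ring
    have hmul : ((lambdaPoly n a b : ℤ) : ZMod n) * (x + y) = x ^ n + y ^ n := by
      rw [hL, hreindex]
      have := geom_sum₂_mul x (-y) n
      have h2 : Odd n := hodd
      calc (∑ i ∈ Finset.range n, x ^ i * (-y) ^ (n - 1 - i)) * (x + y)
          = (∑ i ∈ Finset.range n, x ^ i * (-y) ^ (n - 1 - i)) * (x - -y) := by ring
        _ = x ^ n - (-y) ^ n := geom_sum₂_mul x (-y) n
        _ = x ^ n + y ^ n := by rw [h2.neg_pow]; ring
    have hfermat : x ^ n + y ^ n = x + y := by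
      rw [ZMod.pow_card, ZMod.pow_card]
    have key : ((lambdaPoly n a b : ℤ) : ZMod n) * (x + y) = 1 * (x + y) := by
      rw [hmul, hfermat, one_mul]
    rw [Int.cast_one]
    exact mul_right_cancel₀ hxy key
end
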